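/- For the Jasso-Hernandez–Rong complex of the bigon P₂ (0 → A⊗A → A ⊕ A → A⊗B → 0 with A = ℤ[t]/(t²), B = ℤ[w]/(w²)): H⁰_T(P₂) ≅ ℤ(1,0) ⊕ ℤ(2,0), H¹_T(P₂) = 0, and H²_T(P₂) ≅ ℤ(0,1) ⊕ ℤ(1,1). -/

import Mathlib

/-- The pushforward of free `ℤ`-modules along a partially defined map of bases. -/
noncomputable def pushMap {α β : Type*} [Fintype α] [DecidableEq β]
    (g : α → Option β) : (α → ℤ) →ₗ[ℤ] (β → ℤ) where
  toFun φ b := ∑ a : α, if g a = some b then φ a else 0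
  map_add' φ ψ := by
    funext b
    simp only [Pi.add_apply]
    rw [← Finset.sum_add_distrib]
    refine Finset.sum_congr rfl fun a _ => ?_
    by_cases h : g a = some b <;> simp [h]
  map_smul' c φ := by
    funext b
    simp only [RingHom.id_apply, Pi.smul_apply, smul_eq_mul, Finset.mul_sum]
    refine Finset.sum_congr rfl fun a _ => ?_
    by_cases h : g a = some b <;> simp [h]

/-- The homogeneous part of bidegree `(n, k)` of a free `ℤ`-module with a
bigraded basis `ι`, the bidegree of a basis element being given by `dg`. -/
def degPart {ι : Type} (dg : ι → ℕ × ℕ) (n k : ℕ) : Submodule ℤ (ι → ℤ) where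
  carrier := {φ | ∀ v, dg v ≠ (n, k) → φ v = 0}
  add_mem' := by
    intro φ ψ hφ hψ v hv
    have : φ v + ψ v = 0 := by rw [hφ v hv, hψ v hv, add_zero]
    exact this
  zero_mem' := by intro v _; rfl
  smul_mem' := by
    intro c φ hφ v hv
    have : c * φ v = 0 := by rw [hφ v hv, mul_zero]
    exact this

namespace BigonTutte

/- The Jasso-Hernandez–Rong complex of the bigon `P₂`:
`0 → A⊗A → A ⊕ A → A⊗B → 0` with `A = ℤ[t]/(t²)`, `B = ℤ[w]/(w²)`.
Modules are encoded as free `ℤ`-modules on Boolean bases, `false` standing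
for `1` and `true` for `t` (resp. `w`). -/

/-- `C⁰ = A ⊗ A` (one `A`-factor per component of the edgeless subgraph). -/
abbrev C0 := (Bool × Bool) → ℤ
/-- `C¹ = A ⊕ A` (one summand per one-edge subgraph, each connected). -/
abbrev C1 := (Bool ⊕ Bool) → ℤ
/-- `C² = A ⊗ B` (one component and one cycle for the full subgraph). -/
abbrev C2 := (Bool × Bool) → ℤ

/-- Multiplication `A ⊗ A → A` as a partially defined map of bases
(`t ⊗ t ↦ t² = 0`). -/
def mulMap : Bool × Bool → Option Bool :=
  fun v => if v.1 ∧ v.2 then none else some (v.1 || v.2)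

/-- The differential `d⁰ : A⊗A → A ⊕ A`, multiplication into each summand. -/
noncomputable def d0 : C0 →ₗ[ℤ] C1 :=
  pushMap (fun v => (mulMap v).map Sum.inl) + pushMap (fun v => (mulMap v).map Sum.inr)

/-- The differential `d¹ : A ⊕ A → A⊗B`, the unit map `ℤ → B` on the second
tensor factor, with signs `d¹ = d_{(*,1)} − d_{(1,*)}`. -/
noncomputable def d1 : C1 →ₗ[ℤ] C2 :=
  pushMap (fun s => match s with
    | Sum.inl _ => none
    | Sum.inr x => some (x, false)) -
  pushMap (fun s => match s with
    | Sum.inl x => some (x, false)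
    | Sum.inr _ => none)

/-- Bidegree on the basis of `C⁰`: the number of `t`'s. -/
def dg0 : Bool × Bool → ℕ × ℕ := fun v => (v.1.toNat + v.2.toNat, 0)
/-- Bidegree on the basis of `C¹`. -/
def dg1 : Bool ⊕ Bool → ℕ × ℕ := fun s => (Sum.elim Bool.toNat Bool.toNat s, 0)
/-- Bidegree on the basis of `C² = A ⊗ B`. -/
def dg2 : Bool × Bool → ℕ × ℕ := fun v => (v.1.toNat, v.2.toNat)

/-- The bidegree-`(n,k)` part of `H⁰_T(P₂) = ker d⁰`. -/
noncomputable def H0piece (n k : ℕ) : Type :=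
  ↥(degPart dg0 n k ⊓ LinearMap.ker d0)

/-- The bidegree-`(n,k)` part of `H¹_T(P₂) = ker d¹ / im d⁰`. -/
noncomputable def H1piece (n k : ℕ) : Type :=
  ↥(degPart dg1 n k ⊓ LinearMap.ker d1) ⧸
    Submodule.comap (degPart dg1 n k ⊓ LinearMap.ker d1).subtype (LinearMap.range d0)

/-- The bidegree-`(n,k)` part of `H²_T(P₂) = C² / im d¹`. -/
noncomputable def H2piece (n k : ℕ) : Type :=
  ↥(degPart dg2 n k) ⧸
    Submodule.comap (degPart dg2 n k).subtype (LinearMap.range d1)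

noncomputable instance (n k : ℕ) : AddCommGroup (H0piece n k) := by
  unfold H0piece; infer_instance
noncomputable instance (n k : ℕ) : Module ℤ (H0piece n k) := by
  unfold H0piece; infer_instance
noncomputable instance (n k : ℕ) : AddCommGroup (H1piece n k) := by
  unfold H1piece; infer_instance
noncomputable instance (n k : ℕ) : Module ℤ (H1piece n k) := by
  unfold H1piece; infer_instance
noncomputable instance (n k : ℕ) : AddCommGroup (H2piece n k) := by
  unfold H2piece; infer_instance
noncomputable instance (n k : ℕ) : Module ℤ (H2piece n k) := by
  unfold H2piece; infer_instance

end BigonTutte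


namespace BigonTutte

lemma d0_inl_false (φ : C0) : d0 φ (Sum.inl false) = φ (false, false) := by
  simp [d0, pushMap, mulMap, Fintype.sum_prod_type, Fintype.sum_bool]

lemma d0_inl_true (φ : C0) : d0 φ (Sum.inl true) = φ (false, true) + φ (true, false) := by
  simp [d0, pushMap, mulMap, Fintype.sum_prod_type, Fintype.sum_bool]; ring

lemma d0_inr_false (φ : C0) : d0 φ (Sum.inr false) = φ (false, false) := by
  simp [d0, pushMap, mulMap, Fintype.sum_prod_type, Fintype.sum_bool]

lemma d0_inr_true (φ : C0) : d0 φ (Sum.inr true) = φ (false, true) + φ (true, false) := by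
  simp [d0, pushMap, mulMap, Fintype.sum_prod_type, Fintype.sum_bool]; ring

lemma d1_false (φ : C1) (x : Bool) : d1 φ (x, false) = φ (Sum.inr x) - φ (Sum.inl x) := by
  cases x <;> simp [d1, pushMap, Fintype.sum_sum_type, Fintype.sum_bool]

lemma d1_true (φ : C1) (x : Bool) : d1 φ (x, true) = 0 := by
  cases x <;> simp [d1, pushMap, Fintype.sum_sum_type, Fintype.sum_bool]

lemma mem_ker_d0 (φ : C0) : φ ∈ LinearMap.ker d0 ↔
    φ (false, false) = 0 ∧ φ (false, true) + φ (true, false) = 0 := by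
  constructor
  · intro h
    exact ⟨by rw [← d0_inl_false φ, h]; rfl, by rw [← d0_inl_true φ, h]; rfl⟩
  · rintro ⟨h1, h2⟩
    rw [LinearMap.mem_ker]
    funext s
    rcases s with x | x <;> cases x <;>
      simp only [d0_inl_false, d0_inl_true, d0_inr_false, d0_inr_true, h1, h2] <;> rfl

lemma mem_range_d0 (φ : C1) : φ ∈ LinearMap.range d0 ↔
    φ (Sum.inl false) = φ (Sum.inr false) ∧ φ (Sum.inl true) = φ (Sum.inr true) := by
  constructor
  · rintro ⟨ψ, rfl⟩
    rw [d0_inl_false, d0_inr_false, d0_inl_true, d0_inr_true]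
    exact ⟨rfl, rfl⟩
  · rintro ⟨h1, h2⟩
    refine ⟨fun v => if v = (false, false) then φ (Sum.inl false)
      else if v = (false, true) then φ (Sum.inl true) else 0, ?_⟩
    funext s
    rcases s with x | x <;> cases x <;>
      simp only [d0_inl_false, d0_inl_true, d0_inr_false, d0_inr_true] <;> simp [h1, h2]

lemma mem_ker_d1 (φ : C1) : φ ∈ LinearMap.ker d1 ↔
    φ (Sum.inl false) = φ (Sum.inr false) ∧ φ (Sum.inl true) = φ (Sum.inr true) := by
  constructor
  · intro h
    constructor
    · have := congrFun (LinearMap.mem_ker.mp h) (false, false)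
      rw [d1_false, Pi.zero_apply] at this; omega
    · have := congrFun (LinearMap.mem_ker.mp h) (true, false)
      rw [d1_false, Pi.zero_apply] at this; omega
  · rintro ⟨h1, h2⟩
    rw [LinearMap.mem_ker]
    funext v
    rcases v with ⟨x, b⟩
    cases b
    · rw [d1_false]; cases x
      · rw [← h1]; simp
      · rw [← h2]; simp
    · rw [d1_true]; rfl

lemma mem_range_d1 (φ : C2) : φ ∈ LinearMap.range d1 ↔
    φ (false, true) = 0 ∧ φ (true, true) = 0 := by
  constructor
  · rintro ⟨ψ, rfl⟩
    rw [d1_true, d1_true]; exact ⟨rfl, rfl⟩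
  · rintro ⟨h1, h2⟩
    refine ⟨Sum.elim 0 (fun x => φ (x, false)), ?_⟩
    funext v
    rcases v with ⟨x, b⟩
    cases b
    · rw [d1_false]; simp
    · rw [d1_true]; cases x
      · exact h1.symm
      · exact h2.symm

/-- A subsingleton module is isomorphic to `Fin 0 → ℤ`. -/
noncomputable def zeroEquiv (M : Type*) [AddCommGroup M] [Module ℤ M] [Subsingleton M] :
    M ≃ₗ[ℤ] (Fin 0 → ℤ) where
  toFun := 0
  invFun := 0
  map_add' _ _ := by simp
  map_smul' _ _ := by simp
  left_inv _ := Subsingleton.elim _ _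
  right_inv _ := Subsingleton.elim _ _

/-- `ℤ ≃ₗ (Fin 1 → ℤ)`. -/
noncomputable def intEquiv : ℤ ≃ₗ[ℤ] (Fin 1 → ℤ) :=
  (LinearEquiv.funUnique (Fin 1) ℤ ℤ).symm

end BigonTutte

open BigonTutte in
/-- The cohomology of the Jasso-Hernandez–Rong complex of the bigon `P₂`:
`H⁰_T(P₂) ≅ ℤ(1,0) ⊕ ℤ(2,0)`, `H¹_T(P₂) = 0`, `H²_T(P₂) ≅ ℤ(0,1) ⊕ ℤ(1,1)`
(each bigraded piece is free of the stated rank). -/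
theorem tutte_cohomology_bigon :
    (∀ n k : ℕ, Nonempty (H0piece n k ≃ₗ[ℤ]
      (Fin (if (n, k) = (1, 0) ∨ (n, k) = (2, 0) then 1 else 0) → ℤ))) ∧
    (∀ n k : ℕ, Nonempty (H1piece n k ≃ₗ[ℤ] (Fin 0 → ℤ))) ∧
    (∀ n k : ℕ, Nonempty (H2piece n k ≃ₗ[ℤ]
      (Fin (if (n, k) = (0, 1) ∨ (n, k) = (1, 1) then 1 else 0) → ℤ))) := by
  refine ⟨?_, ?_, ?_⟩
  · -- H0
    intro n k
    by_cases h10 : (n, k) = (1, 0)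
    · rw [if_pos (Or.inl h10)]
      obtain ⟨rfl, rfl⟩ : n = 1 ∧ k = 0 := by
        exact ⟨congrArg Prod.fst h10, congrArg Prod.snd h10⟩
      -- rank 1, generated by e_ft - e_tf
      refine ⟨?_⟩
      refine LinearEquiv.trans (?_ : H0piece 1 0 ≃ₗ[ℤ] ℤ) intEquiv
      refine
      { toFun := fun φ => φ.1 (false, true)
        invFun := fun c => ⟨fun v => if v = (false, true) then c
            else if v = (true, false) then -c else 0, ?_, ?_⟩
        map_add' := fun _ _ => rfl
        map_smul' := fun _ _ => rfl
        left_inv := ?_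
        right_inv := fun c => by simp }
      · intro v hv
        rcases v with ⟨a, b⟩
        cases a <;> cases b <;> simp_all [degPart, dg0]
      · rw [SetLike.mem_coe, mem_ker_d0]; constructor <;> simp
      · rintro ⟨φ, hdeg, hker⟩
        rw [SetLike.mem_coe, mem_ker_d0] at hker
        apply Subtype.ext; funext v
        rcases v with ⟨a, b⟩
        cases a <;> cases b
        · simpa using hker.1.symm
        · simp
        · simp only [Subtype.coe_mk]; simp; omega
        · simp only [Subtype.coe_mk]; simp
          exact (hdeg (true, true) (by simp [dg0])).symm
    · by_cases h20 : (n, k) = (2, 0)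
      · rw [if_pos (Or.inr h20)]
        obtain ⟨rfl, rfl⟩ : n = 2 ∧ k = 0 :=
          ⟨congrArg Prod.fst h20, congrArg Prod.snd h20⟩
        refine ⟨?_⟩
        refine LinearEquiv.trans (?_ : H0piece 2 0 ≃ₗ[ℤ] ℤ) intEquiv
        refine
        { toFun := fun φ => φ.1 (true, true)
          invFun := fun c => ⟨fun v => if v = (true, true) then c else 0, ?_, ?_⟩
          map_add' := fun _ _ => rfl
          map_smul' := fun _ _ => rfl
          left_inv := ?_
          right_inv := fun c => by simp }
        · intro v hv
          rcases v with ⟨a, b⟩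
          cases a <;> cases b <;> simp_all [degPart, dg0]
        · rw [SetLike.mem_coe, mem_ker_d0]; constructor <;> simp
        · rintro ⟨φ, hdeg, hker⟩
          rw [SetLike.mem_coe, mem_ker_d0] at hker
          apply Subtype.ext; funext v
          rcases v with ⟨a, b⟩
          cases a <;> cases b
          · simpa using hker.1.symm
          · simp; exact (hdeg (false, true) (by simp [dg0])).symm
          · simp; exact (hdeg (true, false) (by simp [dg0])).symm
          · simp
      · rw [if_neg (by tauto)]
        have hbot : degPart dg0 n k ⊓ LinearMap.ker d0 = ⊥ := by
          rw [eq_bot_iff]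
          rintro φ ⟨hdeg, hker⟩
          rw [SetLike.mem_coe, mem_ker_d0] at hker
          have hft : φ (false, true) = 0 := hdeg _ (fun h => h10 h.symm)
          have htf : φ (true, false) = 0 := hdeg _ (fun h => h10 h.symm)
          have htt : φ (true, true) = 0 := hdeg _ (fun h => h20 h.symm)
          have : φ = 0 := by
            funext v; rcases v with ⟨a, b⟩
            cases a <;> cases b <;> simp only [Pi.zero_apply] <;>
              first | exact hker.1 | assumption
          simp [this]
        have : Subsingleton (H0piece n k) := by
          unfold H0piece
          rw [hbot]
          infer_instance
        exact ⟨zeroEquiv _⟩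
  · -- H1
    intro n k
    have htop : Submodule.comap (degPart dg1 n k ⊓ LinearMap.ker d1).subtype
        (LinearMap.range d0) = ⊤ := by
      rw [eq_top_iff]
      rintro ⟨φ, hdeg, hker⟩ _
      rw [Submodule.mem_comap, Submodule.coe_subtype, mem_range_d0]
      exact (mem_ker_d1 φ).mp hker
    have : Subsingleton (H1piece n k) := by
      unfold H1piece
      rw [htop]
      exact Submodule.Quotient.subsingleton_iff.mpr rfl
    exact ⟨zeroEquiv _⟩
  · -- H2
    intro n k
    by_cases h01 : (n, k) = (0, 1)
    · rw [if_pos (Or.inl h01)]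
      obtain ⟨rfl, rfl⟩ : n = 0 ∧ k = 1 :=
        ⟨congrArg Prod.fst h01, congrArg Prod.snd h01⟩
      have hbot : Submodule.comap (degPart dg2 0 1).subtype (LinearMap.range d1) = ⊥ := by
        rw [eq_bot_iff]
        rintro ⟨φ, hdeg⟩ hφ
        rw [Submodule.mem_comap, Submodule.coe_subtype, mem_range_d1] at hφ
        have : φ = 0 := by
          funext v; rcases v with ⟨a, b⟩
          cases a <;> cases b
          · exact hdeg _ (by decide)
          · exact hφ.1
          · exact hdeg _ (by decide)
          · exact hdeg _ (by decide)
        simp [Submodule.mem_bot]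
        ext; simp [this]
      have e2 : ↥(degPart dg2 0 1) ≃ₗ[ℤ] ℤ := by
        refine
          { toFun := fun φ => φ.1 (false, true)
            invFun := fun c => ⟨fun v => if v = (false, true) then c else 0, ?_⟩
            map_add' := fun _ _ => rfl
            map_smul' := fun _ _ => rfl
            left_inv := ?_
            right_inv := fun c => by simp }
        · intro v hv
          rcases v with ⟨a, b⟩
          cases a <;> cases b <;> simp_all [degPart, dg2]
        · rintro ⟨φ, hdeg⟩
          apply Subtype.ext; funext v
          rcases v with ⟨a, b⟩
          cases a <;> cases b <;> simp
          · exact (hdeg _ (by decide)).symm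
          · exact (hdeg _ (by decide)).symm
          · exact (hdeg _ (by decide)).symm
      exact ⟨(Submodule.quotEquivOfEqBot _ hbot).trans (e2.trans intEquiv)⟩
    · by_cases h11 : (n, k) = (1, 1)
      · rw [if_pos (Or.inr h11)]
        obtain ⟨rfl, rfl⟩ : n = 1 ∧ k = 1 :=
          ⟨congrArg Prod.fst h11, congrArg Prod.snd h11⟩
        have hbot : Submodule.comap (degPart dg2 1 1).subtype (LinearMap.range d1) = ⊥ := by
          rw [eq_bot_iff]
          rintro ⟨φ, hdeg⟩ hφ
          rw [Submodule.mem_comap, Submodule.coe_subtype, mem_range_d1] at hφ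
          have : φ = 0 := by
            funext v; rcases v with ⟨a, b⟩
            cases a <;> cases b
            · exact hdeg _ (by decide)
            · exact hdeg _ (by decide)
            · exact hdeg _ (by decide)
            · exact hφ.2
          exact (Submodule.mem_bot ℤ).mpr (Subtype.ext this)
        have e2 : ↥(degPart dg2 1 1) ≃ₗ[ℤ] ℤ := by
          refine
            { toFun := fun φ => φ.1 (true, true)
              invFun := fun c => ⟨fun v => if v = (true, true) then c else 0, ?_⟩
              map_add' := fun _ _ => rfl
              map_smul' := fun _ _ => rfl
              left_inv := ?_
              right_inv := fun c => by simp }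
          · intro v hv
            rcases v with ⟨a, b⟩
            cases a <;> cases b <;> simp_all [degPart, dg2]
          · rintro ⟨φ, hdeg⟩
            apply Subtype.ext; funext v
            rcases v with ⟨a, b⟩
            cases a <;> cases b <;> simp
            · exact (hdeg _ (by decide)).symm
            · exact (hdeg _ (by decide)).symm
            · exact (hdeg _ (by decide)).symm
        exact ⟨(Submodule.quotEquivOfEqBot _ hbot).trans (e2.trans intEquiv)⟩
      · rw [if_neg (by tauto)]
        have htop : Submodule.comap (degPart dg2 n k).subtype (LinearMap.range d1) = ⊤ := by
          rw [eq_top_iff]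
          rintro ⟨φ, hdeg⟩ _
          rw [Submodule.mem_comap, Submodule.coe_subtype, mem_range_d1]
          constructor
          · exact hdeg _ (fun h => h01 h.symm)
          · exact hdeg _ (fun h => h11 h.symm)
        have : Subsingleton (H2piece n k) := by
          unfold H2piece
          rw [htop]
          exact Submodule.Quotient.subsingleton_iff.mpr rfl
        exact ⟨zeroEquiv _⟩
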